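/- Let m ⊆ R be a prime ideal, and let g, h ∈ ℤ^n with σ_h(m) = m. Suppose a ∈ 𝒜(g) and b ∈ 𝒜(h) satisfy a^*·a ∈ ι(R) \ ι(m) and b^*·b ∈ ι(R) \ ι(m). Then (a·b^*)^* · (a·b^*) ∈ ι(R) \ ι(m). In particular, b·b^* ∈ ι(R) \ ι(m). -/
import Mathlib


/-- Lemma `NBabc` part (a): in a `ℤ^n`-graded algebra with degree-zero
subalgebra `ι(R)` and anti-involution `*`, if `m` is prime with `σ_h(m) = m`,
`a ∈ 𝒜 g`, `b ∈ 𝒜 h`, `a^*a ∉ ι(m)` and `b^*b ∉ ι(m)`, then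
`(a b^*)^*(a b^*) ∉ ι(m)`; in particular `b b^* ∉ ι(m)`. -/
theorem stmt_16 {K A R : Type*} [Field K] [Ring A] [Algebra K A]
    [CommRing R] [Algebra K R]
    (n : ℕ) (hn : 1 ≤ n)
    (𝒜 : (Fin n → ℤ) → Submodule K A)
    (hdirect : DirectSum.IsInternal 𝒜)
    (hone : (1 : A) ∈ 𝒜 0)
    (hgmul : ∀ g h : Fin n → ℤ, ∀ a ∈ 𝒜 g, ∀ b ∈ 𝒜 h, a * b ∈ 𝒜 (g + h))
    (ι : R →ₐ[K] A) (hinj : Function.Injective ι)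
    (hrange : (𝒜 0 : Set A) = Set.range ι)
    (σ : (Fin n → ℤ) → (R ≃ₐ[K] R))
    (hσ : ∀ g h : Fin n → ℤ, σ (g + h) = σ g * σ h)
    (hcomm : ∀ g : Fin n → ℤ, ∀ a ∈ 𝒜 g, ∀ r : R, a * ι r = ι (σ g r) * a)
    (st : A →ₗ[K] A)
    (hst_mul : ∀ x y : A, st (x * y) = st y * st x)
    (hst_invol : ∀ x : A, st (st x) = x)
    (hst_grade : ∀ g : Fin n → ℤ, ∀ a ∈ 𝒜 g, st a ∈ 𝒜 (-g))
    (hst_R : ∀ r : R, st (ι r) = ι r)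
    (m : Ideal R) (hm : m.IsPrime)
    (g h : Fin n → ℤ) (hfix : Ideal.map (σ h) m = m)
    (a : A) (ha : a ∈ 𝒜 g) (haa : st a * a ∈ Set.range ⇑ι \ ⇑ι '' ↑m)
    (b : A) (hb : b ∈ 𝒜 h) (hbb : st b * b ∈ Set.range ⇑ι \ ⇑ι '' ↑m) :
    st (a * st b) * (a * st b) ∈ Set.range ⇑ι \ ⇑ι '' ↑m ∧
    b * st b ∈ Set.range ⇑ι \ ⇑ι '' ↑m := by
  obtain ⟨⟨r, hr⟩, hrm⟩ := haa
  obtain ⟨⟨s, hs⟩, hsm⟩ := hbb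
  -- r ∉ m, s ∉ m
  have hrnm : r ∉ m := fun hmem => hrm ⟨r, hmem, hr⟩
  have hsnm : s ∉ m := fun hmem => hsm ⟨s, hmem, hs⟩
  -- σ 0 = 1
  have hσ0 : σ 0 = 1 := by
    have h00 := hσ 0 0
    rw [add_zero] at h00
    exact left_eq_mul.mp h00
  have hcomp1 : ∀ x : R, σ h (σ (-h) x) = x := by
    intro x
    have e := hσ h (-h)
    rw [add_neg_cancel, hσ0] at e
    have := DFunLike.congr_fun e.symm x
    simpa using this
  have hcomp2 : ∀ x : R, σ (-h) (σ h x) = x := by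
    intro x
    have e := hσ (-h) h
    rw [neg_add_cancel, hσ0] at e
    have := DFunLike.congr_fun e.symm x
    simpa using this
  have hmap2 : Ideal.map (σ (-h)) m = m := by
    conv_lhs => rw [← hfix]
    rw [show Ideal.map (σ h) m = Ideal.map ((σ h : R →+* R)) m from rfl,
      show Ideal.map (σ (-h)) (Ideal.map ((σ h : R →+* R)) m)
        = Ideal.map ((σ (-h) : R →+* R)) (Ideal.map ((σ h : R →+* R)) m) from rfl,
      Ideal.map_map]
    have hco : ((σ (-h) : R →+* R)).comp ((σ h : R →+* R)) = RingHom.id R := by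
      ext x; simpa using hcomp2 x
    rw [hco, Ideal.map_id]
  -- membership transfer along σ h
  have hmemiff : ∀ x : R, σ h x ∈ m ↔ x ∈ m := by
    intro x
    constructor
    · intro hx
      have : σ (-h) (σ h x) ∈ Ideal.map (σ (-h)) m := Ideal.mem_map_of_mem _ hx
      rwa [hcomp2, hmap2] at this
    · intro hx
      have : σ h x ∈ Ideal.map (σ h) m := Ideal.mem_map_of_mem _ hx
      rwa [hfix] at this
  -- b * st b is in degree 0
  have hbstar : st b ∈ 𝒜 (-h) := hst_grade h b hb
  have hbbst : b * st b ∈ 𝒜 0 := by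
    have := hgmul h (-h) b hb (st b) hbstar
    rwa [add_neg_cancel] at this
  obtain ⟨t, ht⟩ : b * st b ∈ Set.range ⇑ι := by rw [← hrange]; exact hbbst
  -- key identity : s * s = σ (-h) t * s
  have e1 : st b * b * (st b * b) = ι (σ (-h) t) * (st b * b) := by
    calc st b * b * (st b * b)
        = st b * ((b * st b) * b) := by rw [mul_assoc, mul_assoc]
      _ = st b * (ι t * b) := by rw [ht]
      _ = st b * ι t * b := (mul_assoc _ _ _).symm
      _ = ι (σ (-h) t) * st b * b := by rw [hcomm (-h) (st b) hbstar t]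
      _ = ι (σ (-h) t) * (st b * b) := mul_assoc _ _ _
  have e2 : s * s = σ (-h) t * s := by
    apply hinj
    rw [map_mul, map_mul, hs, e1]
  -- t ∉ m
  have htm : t ∉ m := by
    intro htm
    have hσt : σ (-h) t ∈ m := by
      rw [← hmemiff, hcomp1]; exact htm
    have : s * s ∈ m := e2 ▸ m.mul_mem_right s hσt
    rcases hm.mem_or_mem this with hc | hc <;> exact hsnm hc
  have part2 : b * st b ∈ Set.range ⇑ι \ ⇑ι '' ↑m := by
    refine ⟨⟨t, ht⟩, ?_⟩
    rintro ⟨t', ht'm, ht'⟩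
    exact htm (hinj (ht'.trans ht.symm) ▸ ht'm)
  refine ⟨?_, part2⟩
  -- first part
  have e3 : st (a * st b) * (a * st b) = ι (σ h r * t) := by
    calc st (a * st b) * (a * st b)
        = (st (st b) * st a) * (a * st b) := by rw [hst_mul]
      _ = (b * st a) * (a * st b) := by rw [hst_invol]
      _ = b * (st a * a) * st b := by rw [mul_assoc, mul_assoc, mul_assoc]
      _ = b * ι r * st b := by rw [hr]
      _ = ι (σ h r) * b * st b := by rw [hcomm h b hb r]
      _ = ι (σ h r) * (b * st b) := mul_assoc _ _ _
      _ = ι (σ h r) * ι t := by rw [ht]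
      _ = ι (σ h r * t) := (map_mul _ _ _).symm
  rw [e3]
  refine ⟨⟨_, rfl⟩, ?_⟩
  rintro ⟨u, hum, hu⟩
  have : σ h r * t ∈ m := hinj hu ▸ hum
  rcases hm.mem_or_mem this with hc | hc
  · exact hrnm ((hmemiff r).mp hc)
  · exact htm hc
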